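/- Let λ = inf { M(x) : x ∈ [1/3, 3] }, where M(x) = lim_{k→∞} M_{k,k}(x) is the Mina margin map. Then λ ≤ 0.999904; in particular M(0.58) ≤ 0.999904. -/

import Mathlib

/-- `ω(x) = √(8x+1)`. -/
noncomputable def wF (x : ℝ) : ℝ := Real.sqrt (8 * x + 1)

/-- `c(x) = (ω+3)²/16`. -/
noncomputable def cF (x : ℝ) : ℝ := (wF x + 3) ^ 2 / 16

/-- `d(x) = (ω+3)²/(8(ω+1))`. -/
noncomputable def dF (x : ℝ) : ℝ := (wF x + 3) ^ 2 / (8 * (wF x + 1))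

/-- `s(x) = (ω−1)²/(4(ω+7))`. -/
noncomputable def sF (x : ℝ) : ℝ := (wF x - 1) ^ 2 / (4 * (wF x + 7))

/-- `s₋₁(x) = 1/s(1/x)`, the inverse of `s`. -/
noncomputable def sFinv (x : ℝ) : ℝ := 1 / sF (1 / x)

/-- The ℤ-indexed iterates of `s`. -/
noncomputable def sIter (k : ℤ) (x : ℝ) : ℝ :=
  if 0 ≤ k then sF^[k.toNat] x else sFinv^[(-k).toNat] x

/-- `P₀ = 1` and `P_{k+1} − P_k = ∏_{i=0}^{k} (c_i(x) − 1)`. -/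
noncomputable def Pfun (x : ℝ) : ℕ → ℝ
  | 0 => 1
  | k + 1 => Pfun x k + ∏ i ∈ Finset.range (k + 1), (cF (sIter i x) - 1)

/-- `S₀ = 1` and `S_{k+1} − S_k = ∏_{i=0}^{k} (d_i(x) − 1)`. -/
noncomputable def Sfun (x : ℝ) : ℕ → ℝ
  | 0 => 1
  | k + 1 => Sfun x k + ∏ i ∈ Finset.range (k + 1), (dF (sIter i x) - 1)

/-- `Q₁ = 0` and `Q_{k+1} − Q_k = ∏_{i=1}^{k} (c_{−i}(x) − 1)⁻¹` for `k ≥ 1`. -/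
noncomputable def Qfun (x : ℝ) : ℕ → ℝ
  | 0 => 0
  | 1 => 0
  | k + 2 => Qfun x (k + 1) + ∏ i ∈ Finset.range (k + 1), (cF (sIter (-((i : ℤ) + 1)) x) - 1)⁻¹

/-- `T₁ = 0` and `T_{k+1} − T_k = ∏_{i=1}^{k} (d_{−i}(x) − 1)⁻¹` for `k ≥ 1`. -/
noncomputable def Tfun (x : ℝ) : ℕ → ℝ
  | 0 => 0
  | 1 => 0
  | k + 2 => Tfun x (k + 1) + ∏ i ∈ Finset.range (k + 1), (dF (sIter (-((i : ℤ) + 1)) x) - 1)⁻¹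

/-- The finite-trail Mina margin map `M_{ℓ,k}(x) = x(S_k + T_ℓ)/(P_k + Q_ℓ)`. -/
noncomputable def Mfin (l k : ℕ) (x : ℝ) : ℝ :=
  x * (Sfun x k + Tfun x l) / (Pfun x k + Qfun x l)

lemma wF_nonneg (x : ℝ) : 0 ≤ wF x := Real.sqrt_nonneg _
lemma wF_sq {x : ℝ} (hx : 0 < x) : wF x ^ 2 = 8 * x + 1 := by
  rw [wF, Real.sq_sqrt]; linarith
lemma wF_gt_one {x : ℝ} (hx : 0 < x) : 1 < wF x := by
  have h := wF_sq hx; nlinarith [wF_nonneg x]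

lemma wF_lb {x a l : ℝ} (hxa : a ≤ x) (h0 : 0 ≤ l) (h1 : l ^ 2 ≤ 8 * a + 1) : l ≤ wF x := by
  have : l = Real.sqrt (l ^ 2) := (Real.sqrt_sq h0).symm
  rw [this, wF]
  exact Real.sqrt_le_sqrt (by nlinarith)

lemma wF_ub {x b u : ℝ} (hxb : x ≤ b) (h2 : 8 * b + 1 ≤ u ^ 2) (h3 : 0 ≤ u) : wF x ≤ u := by
  rw [wF]
  calc Real.sqrt (8 * x + 1) ≤ Real.sqrt (u ^ 2) := Real.sqrt_le_sqrt (by nlinarith)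
    _ = u := Real.sqrt_sq h3

lemma sF_lb {x l u p : ℝ} (h1 : l ≤ wF x) (h2 : wF x ≤ u) (hl : 1 ≤ l)
    (hp : p ≤ (l - 1) ^ 2 / (4 * (u + 7))) : p ≤ sF x := by
  refine hp.trans ?_
  rw [sF]
  exact div_le_div₀ (sq_nonneg _) (by nlinarith) (by nlinarith) (by nlinarith)

lemma sF_ub {x l u q : ℝ} (h1 : l ≤ wF x) (h2 : wF x ≤ u) (hl : 1 ≤ l)
    (hq : (u - 1) ^ 2 / (4 * (l + 7)) ≤ q) : sF x ≤ q := by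
  refine le_trans ?_ hq
  rw [sF]
  exact div_le_div₀ (sq_nonneg _) (by nlinarith) (by nlinarith) (by nlinarith)

lemma cF_sub_one_lb {x l u p : ℝ} (h1 : l ≤ wF x) (h2 : wF x ≤ u) (hl : 1 ≤ l)
    (hp : p ≤ (l + 3) ^ 2 / 16 - 1) : p ≤ cF x - 1 := by
  refine hp.trans ?_
  rw [cF]
  nlinarith [mul_nonneg (sub_nonneg.2 h1) (by linarith : (0:ℝ) ≤ wF x + l + 6)]

lemma cF_sub_one_ub {x l u q : ℝ} (h1 : l ≤ wF x) (h2 : wF x ≤ u) (hl : 1 ≤ l)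
    (hq : (u + 3) ^ 2 / 16 - 1 ≤ q) : cF x - 1 ≤ q := by
  refine le_trans ?_ hq
  rw [cF]
  nlinarith [mul_nonneg (sub_nonneg.2 h2) (by linarith : (0:ℝ) ≤ wF x + u + 6)]

lemma dF_sub_one (x : ℝ) : dF x - 1 = (wF x - 1) ^ 2 / (8 * (wF x + 1)) := by
  have h : (0:ℝ) < 8 * (wF x + 1) := by nlinarith [wF_nonneg x]
  have h' : wF x + 1 ≠ 0 := by linarith [wF_nonneg x]
  rw [dF]
  field_simp
  ring

lemma dF_sub_one_lb {x l u p : ℝ} (h1 : l ≤ wF x) (h2 : wF x ≤ u) (hl : 1 ≤ l)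
    (hp : p ≤ (l - 1) ^ 2 / (8 * (u + 1))) : p ≤ dF x - 1 := by
  refine hp.trans ?_
  rw [dF_sub_one]
  exact div_le_div₀ (sq_nonneg _) (by nlinarith) (by nlinarith) (by nlinarith)

lemma dF_sub_one_ub {x l u q : ℝ} (h1 : l ≤ wF x) (h2 : wF x ≤ u) (hl : 1 ≤ l)
    (hq : (u - 1) ^ 2 / (8 * (l + 1)) ≤ q) : dF x - 1 ≤ q := by
  refine le_trans ?_ hq
  rw [dF_sub_one]
  exact div_le_div₀ (sq_nonneg _) (by nlinarith) (by nlinarith) (by nlinarith)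

lemma sFinv_eq {y : ℝ} (hy : 0 < y) : sFinv y = 4 * (wF (1/y) + 7) / (wF (1/y) - 1) ^ 2 := by
  have h1 : (1:ℝ)/y > 0 := by positivity
  have hw := wF_gt_one h1
  rw [sFinv, sF, one_div_div]

lemma sFinv_lb {y l u p : ℝ} (hy : 0 < y) (h1 : l ≤ wF (1/y)) (h2 : wF (1/y) ≤ u) (hl : 1 < l)
    (hp : p ≤ 4 * (l + 7) / (u - 1) ^ 2) : p ≤ sFinv y := by
  refine hp.trans ?_
  rw [sFinv_eq hy]
  exact div_le_div₀ (by nlinarith) (by nlinarith) (by nlinarith) (by nlinarith)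

lemma sFinv_ub {y l u q : ℝ} (hy : 0 < y) (h1 : l ≤ wF (1/y)) (h2 : wF (1/y) ≤ u) (hl : 1 < l)
    (hq : 4 * (u + 7) / (l - 1) ^ 2 ≤ q) : sFinv y ≤ q := by
  refine le_trans ?_ hq
  rw [sFinv_eq hy]
  exact div_le_div₀ (by nlinarith) (by nlinarith) (by nlinarith) (by nlinarith)

lemma wF_inv_lb {y b l : ℝ} (hy : 0 < y) (hyb : y ≤ b) (h0 : 0 ≤ l) (h1 : l ^ 2 ≤ 8 / b + 1) :
    l ≤ wF (1 / y) := by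
  have hb : 0 < b := lt_of_lt_of_le hy hyb
  exact wF_lb (show 1/b ≤ 1/y from one_div_le_one_div_of_le hy hyb) h0
    (by rw [mul_one_div]; exact h1)

lemma wF_inv_ub {y a u : ℝ} (ha : 0 < a) (hya : a ≤ y) (h2 : 8 / a + 1 ≤ u ^ 2) (hu : 0 ≤ u) :
    wF (1 / y) ≤ u := by
  have hy : 0 < y := lt_of_lt_of_le ha hya
  exact wF_ub (show 1/y ≤ 1/a from one_div_le_one_div_of_le ha hya)
    (by rw [mul_one_div]; exact h2) hu

lemma inv_lb {c q r : ℝ} (hc : 0 < c) (hq : c ≤ q) (hr : r ≤ 1 / q) : r ≤ c⁻¹ :=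
  hr.trans (by rw [one_div]; exact inv_anti₀ hc hq)

lemma inv_ub {c p r : ℝ} (hp : 0 < p) (hpc : p ≤ c) (hr : 1 / p ≤ r) : c⁻¹ ≤ r :=
  le_trans (by rw [← one_div]; exact one_div_le_one_div_of_le hp hpc) hr
lemma sF_pos {x : ℝ} (hx : 0 < x) : 0 < sF x := by
  have hw := wF_gt_one hx
  rw [sF]; exact div_pos (pow_pos (by linarith) 2) (by nlinarith)

lemma sF_le_ninth {x : ℝ} (hx : 0 < x) : sF x ≤ x / 9 := by
  have hw := wF_gt_one hx
  have hsq := wF_sq hx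
  rw [sF, div_le_div_iff₀ (by nlinarith) (by norm_num)]
  nlinarith [mul_nonneg (by linarith : (0:ℝ) ≤ wF x - 1) (sq_nonneg (wF x - 5))]

lemma sF_le_self {x : ℝ} (hx : 0 < x) : sF x ≤ x := le_trans (sF_le_ninth hx) (by linarith)

lemma cF_sub_one_pos {x : ℝ} (hx : 0 < x) : 0 < cF x - 1 := by
  have hw := wF_gt_one hx
  rw [cF]; nlinarith

lemma dF_sub_one_pos {x : ℝ} (hx : 0 < x) : 0 < dF x - 1 := by
  have hw := wF_gt_one hx
  rw [dF_sub_one]; exact div_pos (pow_pos (by linarith) 2) (by nlinarith [wF_nonneg x])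

lemma dF_sub_one_le_sq {x : ℝ} (hx : 0 < x) : dF x - 1 ≤ x ^ 2 := by
  have hw := wF_gt_one hx
  have hsq := wF_sq hx
  rw [dF_sub_one, div_le_iff₀ (by nlinarith)]
  have h1 : 0 ≤ wF x - 1 := by linarith
  nlinarith [mul_nonneg (mul_nonneg h1 h1) h1, sq_nonneg (wF x - 1), sq_nonneg (wF x + 1)]

lemma dF_big {y : ℝ} (hy : 30000 ≤ y) : 50 ≤ dF y - 1 := by
  have hy0 : (0:ℝ) < y := by linarith
  have hsq := wF_sq hy0
  have hw : (489:ℝ) ≤ wF y := by nlinarith [wF_nonneg y]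
  rw [dF_sub_one, le_div_iff₀ (by nlinarith)]
  nlinarith

lemma sFinv_pos {x : ℝ} (hx : 0 < x) : 0 < sFinv x := by
  have h1 : (0:ℝ) < 1/x := by positivity
  rw [sFinv]
  exact div_pos one_pos (sF_pos h1)

lemma sFinv_ge {x : ℝ} (hx : 0 < x) : 9 * x ≤ sFinv x := by
  have h1 : (0:ℝ) < 1/x := by positivity
  have h2 := sF_pos h1
  have h3 := sF_le_ninth h1
  rw [sFinv]
  rw [le_div_iff₀ h2]
  calc 9 * x * sF (1/x) ≤ 9 * x * ((1/x)/9) := by nlinarith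
    _ = 1 := by field_simp

-- iterates
lemma sF_iter_pos {x : ℝ} (hx : 0 < x) (n : ℕ) : 0 < sF^[n] x := by
  induction n with
  | zero => simpa using hx
  | succ n ih => rw [Function.iterate_succ_apply']; exact sF_pos ih

lemma sF_iter_le {x : ℝ} (hx : 0 < x) (n : ℕ) : sF^[n] x ≤ x := by
  induction n with
  | zero => simp
  | succ n ih =>
    rw [Function.iterate_succ_apply']
    exact le_trans (sF_le_self (sF_iter_pos hx n)) ih

lemma sFinv_iter_pos {x : ℝ} (hx : 0 < x) (n : ℕ) : 0 < sFinv^[n] x := by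
  induction n with
  | zero => simpa using hx
  | succ n ih => rw [Function.iterate_succ_apply']; exact sFinv_pos ih

lemma sFinv_iter_ge {x : ℝ} (hx : 0 < x) (n : ℕ) : 9 ^ n * x ≤ sFinv^[n] x := by
  induction n with
  | zero => simp
  | succ n ih =>
    rw [Function.iterate_succ_apply']
    calc 9 ^ (n+1) * x = 9 * (9 ^ n * x) := by ring
      _ ≤ 9 * sFinv^[n] x := by linarith
      _ ≤ sFinv (sFinv^[n] x) := sFinv_ge (sFinv_iter_pos hx n)

lemma sIter_natCast (x : ℝ) (i : ℕ) : sIter (i : ℤ) x = sF^[i] x := by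
  simp [sIter]

lemma sIter_negCast (x : ℝ) (i : ℕ) : sIter (-((i : ℤ) + 1)) x = sFinv^[i+1] x := by
  have h : ¬ (0 ≤ -((i:ℤ)+1)) := by omega
  simp only [sIter, if_neg h, neg_neg]
  norm_num

lemma Qfun_succ (x : ℝ) (k : ℕ) (hk : 1 ≤ k) :
    Qfun x (k + 1) = Qfun x k + ∏ i ∈ Finset.range k, (cF (sIter (-((i : ℤ) + 1)) x) - 1)⁻¹ := by
  obtain ⟨j, rfl⟩ : ∃ j, k = j + 1 := ⟨k - 1, by omega⟩
  rfl

lemma Tfun_succ (x : ℝ) (k : ℕ) (hk : 1 ≤ k) :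
    Tfun x (k + 1) = Tfun x k + ∏ i ∈ Finset.range k, (dF (sIter (-((i : ℤ) + 1)) x) - 1)⁻¹ := by
  obtain ⟨j, rfl⟩ : ∃ j, k = j + 1 := ⟨k - 1, by omega⟩
  rfl
lemma prodC_pos {x : ℝ} (hx : 0 < x) (k : ℕ) :
    0 < ∏ i ∈ Finset.range k, (cF (sIter (i:ℤ) x) - 1) :=
  Finset.prod_pos fun i _ => by rw [sIter_natCast]; exact cF_sub_one_pos (sF_iter_pos hx i)

lemma prodD_pos {x : ℝ} (hx : 0 < x) (k : ℕ) :
    0 < ∏ i ∈ Finset.range k, (dF (sIter (i:ℤ) x) - 1) :=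
  Finset.prod_pos fun i _ => by rw [sIter_natCast]; exact dF_sub_one_pos (sF_iter_pos hx i)

lemma prodQC_pos {x : ℝ} (hx : 0 < x) (k : ℕ) :
    0 < ∏ i ∈ Finset.range k, (cF (sIter (-((i:ℤ)+1)) x) - 1)⁻¹ :=
  Finset.prod_pos fun i _ => by
    rw [sIter_negCast]
    exact inv_pos.2 (cF_sub_one_pos (sFinv_iter_pos hx (i+1)))

lemma prodQD_pos {x : ℝ} (hx : 0 < x) (k : ℕ) :
    0 < ∏ i ∈ Finset.range k, (dF (sIter (-((i:ℤ)+1)) x) - 1)⁻¹ :=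
  Finset.prod_pos fun i _ => by
    rw [sIter_negCast]
    exact inv_pos.2 (dF_sub_one_pos (sFinv_iter_pos hx (i+1)))

lemma Pfun_mono {x : ℝ} (hx : 0 < x) {k l : ℕ} (h : k ≤ l) : Pfun x k ≤ Pfun x l := by
  induction l, h using Nat.le_induction with
  | base => exact le_refl _
  | succ n hn ih =>
    have : Pfun x (n+1) = Pfun x n + ∏ i ∈ Finset.range (n+1), (cF (sIter (i:ℤ) x) - 1) := rfl
    rw [this]
    have := prodC_pos hx (n+1)
    linarith

lemma Qfun_mono {x : ℝ} (hx : 0 < x) {k l : ℕ} (hk : 1 ≤ k) (h : k ≤ l) : Qfun x k ≤ Qfun x l := by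
  induction l, h using Nat.le_induction with
  | base => exact le_refl _
  | succ n hn ih =>
    rw [Qfun_succ x n (le_trans hk hn)]
    have := prodQC_pos hx n
    linarith

lemma Sfun_tail {x : ℝ} (hx : 0 < x) (hxu : x ^ 2 ≤ 2/3) {k : ℕ} (h : 6 ≤ k) :
    Sfun x k ≤ Sfun x 6 + 2 * ∏ i ∈ Finset.range 6, (dF (sIter (i:ℤ) x) - 1) := by
  have key : ∀ l, 6 ≤ l → Sfun x l + 2 * (∏ i ∈ Finset.range l, (dF (sIter (i:ℤ) x) - 1))
      ≤ Sfun x 6 + 2 * ∏ i ∈ Finset.range 6, (dF (sIter (i:ℤ) x) - 1) := by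
    intro l hl
    induction l, hl using Nat.le_induction with
    | base => exact le_refl _
    | succ n hn ih =>
      have hS : Sfun x (n+1) = Sfun x n + ∏ i ∈ Finset.range (n+1), (dF (sIter (i:ℤ) x) - 1) := rfl
      have hprod : (∏ i ∈ Finset.range (n+1), (dF (sIter (i:ℤ) x) - 1))
          = (∏ i ∈ Finset.range n, (dF (sIter (i:ℤ) x) - 1)) * (dF (sIter (n:ℤ) x) - 1) :=
        Finset.prod_range_succ _ _
      have hfac : dF (sIter (n:ℤ) x) - 1 ≤ 2/3 := by
        rw [sIter_natCast]
        have h1 := dF_sub_one_le_sq (sF_iter_pos hx n)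
        have h2 := sF_iter_le hx n
        have h3 := (sF_iter_pos hx n).le
        nlinarith
      have hpp := prodD_pos hx n
      have : 3 * (∏ i ∈ Finset.range (n+1), (dF (sIter (i:ℤ) x) - 1))
          ≤ 2 * ∏ i ∈ Finset.range n, (dF (sIter (i:ℤ) x) - 1) := by
        rw [hprod]; nlinarith
      rw [hS]
      linarith
  have := key k h
  have := prodD_pos hx k
  linarith

lemma Tfun_tail {x : ℝ} (hx29 : 29/50 ≤ x) {k : ℕ} (h : 5 ≤ k) :
    Tfun x (k+1) ≤ Tfun x 6 + 2 * ∏ i ∈ Finset.range 5, (dF (sIter (-((i:ℤ)+1)) x) - 1)⁻¹ := by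
  have hx : 0 < x := by linarith
  have key : ∀ l, 5 ≤ l → Tfun x (l+1) + 2 * (∏ i ∈ Finset.range l, (dF (sIter (-((i:ℤ)+1)) x) - 1)⁻¹)
      ≤ Tfun x 6 + 2 * ∏ i ∈ Finset.range 5, (dF (sIter (-((i:ℤ)+1)) x) - 1)⁻¹ := by
    intro l hl
    induction l, hl using Nat.le_induction with
    | base => exact le_refl _
    | succ n hn ih =>
      have hT : Tfun x (n+2) = Tfun x (n+1) + ∏ i ∈ Finset.range (n+1), (dF (sIter (-((i:ℤ)+1)) x) - 1)⁻¹ :=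
        Tfun_succ x (n+1) (by omega)
      have hprod : (∏ i ∈ Finset.range (n+1), (dF (sIter (-((i:ℤ)+1)) x) - 1)⁻¹)
          = (∏ i ∈ Finset.range n, (dF (sIter (-((i:ℤ)+1)) x) - 1)⁻¹) * (dF (sIter (-((n:ℤ)+1)) x) - 1)⁻¹ :=
        Finset.prod_range_succ _ _
      have hbig : (30000:ℝ) ≤ sFinv^[n+1] x := by
        have h1 := sFinv_iter_ge hx (n+1)
        have h2 : (9:ℝ) ^ 6 ≤ 9 ^ (n+1) := by
          apply pow_le_pow_right₀ (by norm_num)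
          omega
        have : (531441:ℝ) * (29/50) ≤ 9 ^ (n+1) * x := by
          apply mul_le_mul h2 hx29 (by norm_num) (by positivity)
          |>.trans_eq' (by norm_num)
        calc (30000:ℝ) ≤ 531441 * (29/50) := by norm_num
          _ ≤ 9 ^ (n+1) * x := this
          _ ≤ _ := h1
      have hfac : (dF (sIter (-((n:ℤ)+1)) x) - 1)⁻¹ ≤ 2/3 := by
        rw [sIter_negCast]
        have h50 := dF_big hbig
        have : (dF (sFinv^[n+1] x) - 1)⁻¹ ≤ 50⁻¹ := by
          apply inv_anti₀ (by norm_num) h50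
        linarith
      have hpp := prodQD_pos hx n
      have hfpos : 0 < (dF (sIter (-((n:ℤ)+1)) x) - 1)⁻¹ := by
        rw [sIter_negCast]
        exact inv_pos.2 (dF_sub_one_pos (sFinv_iter_pos hx (n+1)))
      have h3 : 3 * (∏ i ∈ Finset.range (n+1), (dF (sIter (-((i:ℤ)+1)) x) - 1)⁻¹)
          ≤ 2 * ∏ i ∈ Finset.range n, (dF (sIter (-((i:ℤ)+1)) x) - 1)⁻¹ := by
        rw [hprod]; nlinarith
      rw [hT]
      linarith
  have := key k h
  have := prodQD_pos hx k
  linarith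

set_option maxHeartbeats 1000000 in
lemma forward_bounds : (4704503476781769903249859/2500000000000000000000000 : ℝ) ≤ Pfun (29/50 : ℝ) 6 ∧ Sfun (29/50 : ℝ) 6 ≤ (10701489813435218132374477/10000000000000000000000000 : ℝ) ∧ (∏ i ∈ Finset.range 6, (dF (sIter (i:ℤ) (29/50 : ℝ)) - 1)) ≤ (1/10000000000000000000000000 : ℝ) := by
  have hs0l : (29/50 : ℝ) ≤ (29/50 : ℝ) := le_refl _
  have hs0u : (29/50 : ℝ) ≤ (29/50 : ℝ) := le_refl _
  have hw0l : (4749736834815166893869167/2000000000000000000000000 : ℝ) ≤ wF ((29/50 : ℝ)) := wF_lb hs0l (by norm_num) (by norm_num)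
  have hw0u : wF ((29/50 : ℝ)) ≤ (5937171043518958617336459/2500000000000000000000000 : ℝ) := wF_ub hs0u (by norm_num) (by norm_num)
  have hc0l : (503484785329902370375293/625000000000000000000000 : ℝ) ≤ cF ((29/50 : ℝ)) - 1 := cF_sub_one_lb hw0l hw0u (by norm_num) (by norm_num)
  have hc0u : cF ((29/50 : ℝ)) - 1 ≤ (8055756565278437926004689/10000000000000000000000000 : ℝ) := cF_sub_one_ub hw0l hw0u (by norm_num) (by norm_num)
  have hd0l : (700124764655582160968427/10000000000000000000000000 : ℝ) ≤ dF ((29/50 : ℝ)) - 1 := dF_sub_one_lb hw0l hw0u (by norm_num) (by norm_num)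
  have hd0u : dF ((29/50 : ℝ)) - 1 ≤ (175031191163895540242107/2500000000000000000000000 : ℝ) := dF_sub_one_ub hw0l hw0u (by norm_num) (by norm_num)
  have hd0p : (0:ℝ) ≤ dF ((29/50 : ℝ)) - 1 := le_trans (by norm_num) hd0l
  have hs1l : (63009656543382997400183/1250000000000000000000000 : ℝ) ≤ sF ((29/50 : ℝ)) := sF_lb hw0l hw0u (by norm_num) (by norm_num)
  have hs1u : sF ((29/50 : ℝ)) ≤ (100815450469412795840293/2000000000000000000000000 : ℝ) := sF_ub hw0l hw0u (by norm_num) (by norm_num)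
  have hw1l : (370185474241783794731847/312500000000000000000000 : ℝ) ≤ wF (sF ((29/50 : ℝ))) := wF_lb hs1l (by norm_num) (by norm_num)
  have hw1u : wF (sF ((29/50 : ℝ))) ≤ (2961483793934270357854777/2500000000000000000000000 : ℝ) := wF_ub hs1u (by norm_num) (by norm_num)
  have hc1l : (188852863414987505276579/2000000000000000000000000 : ℝ) ≤ cF (sF ((29/50 : ℝ))) - 1 := cF_sub_one_lb hw1l hw1u (by norm_num) (by norm_num)
  have hc1u : cF (sF ((29/50 : ℝ))) - 1 ≤ (944264317074937526382899/10000000000000000000000000 : ℝ) := cF_sub_one_ub hw1l hw1u (by norm_num) (by norm_num)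
  have hd1l : (9748600384958461473021/5000000000000000000000000 : ℝ) ≤ dF (sF ((29/50 : ℝ))) - 1 := dF_sub_one_lb hw1l hw1u (by norm_num) (by norm_num)
  have hd1u : dF (sF ((29/50 : ℝ))) - 1 ≤ (4874300192479230736511/2500000000000000000000000 : ℝ) := dF_sub_one_ub hw1l hw1u (by norm_num) (by norm_num)
  have hd1p : (0:ℝ) ≤ dF (sF ((29/50 : ℝ))) - 1 := le_trans (by norm_num) hd1l
  have hs2l : (208164074715931849141/200000000000000000000000 : ℝ) ≤ sF (sF ((29/50 : ℝ))) := sF_lb hw1l hw1u (by norm_num) (by norm_num)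
  have hs2u : sF (sF ((29/50 : ℝ))) ≤ (10408203735796592457051/10000000000000000000000000 : ℝ) := sF_ub hw1l hw1u (by norm_num) (by norm_num)
  have hw2l : (5020773254660673465727527/5000000000000000000000000 : ℝ) ≤ wF (sF (sF ((29/50 : ℝ)))) := wF_lb hs2l (by norm_num) (by norm_num)
  have hw2u : wF (sF (sF ((29/50 : ℝ)))) ≤ (10041546509321346931455059/10000000000000000000000000 : ℝ) := wF_ub hs2u (by norm_num) (by norm_num)
  have hc2l : (2078404286340339552417/1000000000000000000000000 : ℝ) ≤ cF (sF (sF ((29/50 : ℝ)))) - 1 := cF_sub_one_lb hw2l hw2u (by norm_num) (by norm_num)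
  have hc2u : cF (sF (sF ((29/50 : ℝ)))) - 1 ≤ (20784042863403395524173/10000000000000000000000000 : ℝ) := cF_sub_one_ub hw2l hw2u (by norm_num) (by norm_num)
  have hd2l : (538291928964273831/500000000000000000000000 : ℝ) ≤ dF (sF (sF ((29/50 : ℝ)))) - 1 := dF_sub_one_lb hw2l hw2u (by norm_num) (by norm_num)
  have hd2u : dF (sF (sF ((29/50 : ℝ)))) - 1 ≤ (10765838579285476621/10000000000000000000000000 : ℝ) := dF_sub_one_ub hw2l hw2u (by norm_num) (by norm_num)
  have hd2p : (0:ℝ) ≤ dF (sF (sF ((29/50 : ℝ)))) - 1 := le_trans (by norm_num) hd2l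
  have hs3l : (5391301492993237881/10000000000000000000000000 : ℝ) ≤ sF (sF (sF ((29/50 : ℝ)))) := sF_lb hw2l hw2u (by norm_num) (by norm_num)
  have hs3u : sF (sF (sF ((29/50 : ℝ)))) ≤ (2695650746496618941/5000000000000000000000000 : ℝ) := sF_ub hw2l hw2u (by norm_num) (by norm_num)
  have hw3l : (10000021565182719117666077/10000000000000000000000000 : ℝ) ≤ wF (sF (sF (sF ((29/50 : ℝ))))) := wF_lb hs3l (by norm_num) (by norm_num)
  have hw3u : wF (sF (sF (sF ((29/50 : ℝ))))) ≤ (5000010782591359558833041/5000000000000000000000000 : ℝ) := wF_ub hs3u (by norm_num) (by norm_num)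
  have hc3l : (10782594266165743719/10000000000000000000000000 : ℝ) ≤ cF (sF (sF (sF ((29/50 : ℝ))))) - 1 := cF_sub_one_lb hw3l hw3u (by norm_num) (by norm_num)
  have hc3u : cF (sF (sF (sF ((29/50 : ℝ))))) - 1 ≤ (5391297133082871861/5000000000000000000000000 : ℝ) := cF_sub_one_ub hw3l hw3u (by norm_num) (by norm_num)
  have hd3l : (90831368019/312500000000000000000000 : ℝ) ≤ dF (sF (sF (sF ((29/50 : ℝ))))) - 1 := dF_sub_one_lb hw3l hw3u (by norm_num) (by norm_num)
  have hd3u : dF (sF (sF (sF ((29/50 : ℝ))))) - 1 ≤ (2906603776609/10000000000000000000000000 : ℝ) := dF_sub_one_ub hw3l hw3u (by norm_num) (by norm_num)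
  have hd3p : (0:ℝ) ≤ dF (sF (sF (sF ((29/50 : ℝ))))) - 1 := le_trans (by norm_num) hd3l
  have hs4l : (1453303063581/10000000000000000000000000 : ℝ) ≤ sF (sF (sF (sF ((29/50 : ℝ))))) := sF_lb hw3l hw3u (by norm_num) (by norm_num)
  have hs4u : sF (sF (sF (sF ((29/50 : ℝ))))) ≤ (726651531791/5000000000000000000000000 : ℝ) := sF_ub hw3l hw3u (by norm_num) (by norm_num)
  have hw4l : (5000000000002906606127161/5000000000000000000000000 : ℝ) ≤ wF (sF (sF (sF (sF ((29/50 : ℝ)))))) := wF_lb hs4l (by norm_num) (by norm_num)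
  have hw4u : wF (sF (sF (sF (sF ((29/50 : ℝ)))))) ≤ (10000000000005813212254327/10000000000000000000000000 : ℝ) := wF_ub hs4u (by norm_num) (by norm_num)
  have hc4l : (2906606127161/10000000000000000000000000 : ℝ) ≤ cF (sF (sF (sF (sF ((29/50 : ℝ)))))) - 1 := cF_sub_one_lb hw4l hw4u (by norm_num) (by norm_num)
  have hc4u : cF (sF (sF (sF (sF ((29/50 : ℝ)))))) - 1 ≤ (726651531791/2500000000000000000000000 : ℝ) := cF_sub_one_ub hw4l hw4u (by norm_num) (by norm_num)
  have hd4l : (0 : ℝ) ≤ dF (sF (sF (sF (sF ((29/50 : ℝ)))))) - 1 := dF_sub_one_lb hw4l hw4u (by norm_num) (by norm_num)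
  have hd4u : dF (sF (sF (sF (sF ((29/50 : ℝ)))))) - 1 ≤ (1/10000000000000000000000000 : ℝ) := dF_sub_one_ub hw4l hw4u (by norm_num) (by norm_num)
  have hd4p : (0:ℝ) ≤ dF (sF (sF (sF (sF ((29/50 : ℝ)))))) - 1 := le_trans (by norm_num) hd4l
  have hs5l : (0 : ℝ) ≤ sF (sF (sF (sF (sF ((29/50 : ℝ)))))) := sF_lb hw4l hw4u (by norm_num) (by norm_num)
  have hs5u : sF (sF (sF (sF (sF ((29/50 : ℝ)))))) ≤ (1/10000000000000000000000000 : ℝ) := sF_ub hw4l hw4u (by norm_num) (by norm_num)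
  have hw5l : (1 : ℝ) ≤ wF (sF (sF (sF (sF (sF ((29/50 : ℝ))))))) := wF_lb hs5l (by norm_num) (by norm_num)
  have hw5u : wF (sF (sF (sF (sF (sF ((29/50 : ℝ))))))) ≤ (2500000000000000000000001/2500000000000000000000000 : ℝ) := wF_ub hs5u (by norm_num) (by norm_num)
  have hc5l : (0 : ℝ) ≤ cF (sF (sF (sF (sF (sF ((29/50 : ℝ))))))) - 1 := cF_sub_one_lb hw5l hw5u (by norm_num) (by norm_num)
  have hc5u : cF (sF (sF (sF (sF (sF ((29/50 : ℝ))))))) - 1 ≤ (3/10000000000000000000000000 : ℝ) := cF_sub_one_ub hw5l hw5u (by norm_num) (by norm_num)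
  have hd5l : (0 : ℝ) ≤ dF (sF (sF (sF (sF (sF ((29/50 : ℝ))))))) - 1 := dF_sub_one_lb hw5l hw5u (by norm_num) (by norm_num)
  have hd5u : dF (sF (sF (sF (sF (sF ((29/50 : ℝ))))))) - 1 ≤ (1/10000000000000000000000000 : ℝ) := dF_sub_one_ub hw5l hw5u (by norm_num) (by norm_num)
  have hd5p : (0:ℝ) ≤ dF (sF (sF (sF (sF (sF ((29/50 : ℝ))))))) - 1 := le_trans (by norm_num) hd5l
  have hit0 : sF^[0] (29/50 : ℝ) = (29/50 : ℝ) := Function.iterate_zero_apply _ _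
  have hit1 : sF^[1] (29/50 : ℝ) = sF ((29/50 : ℝ)) := by rw [Function.iterate_one]
  have hit2 : sF^[2] (29/50 : ℝ) = sF (sF ((29/50 : ℝ))) := by rw [show (2:ℕ) = 1+1 from rfl, Function.iterate_succ_apply', hit1]
  have hit3 : sF^[3] (29/50 : ℝ) = sF (sF (sF ((29/50 : ℝ)))) := by rw [show (3:ℕ) = 2+1 from rfl, Function.iterate_succ_apply', hit2]
  have hit4 : sF^[4] (29/50 : ℝ) = sF (sF (sF (sF ((29/50 : ℝ))))) := by rw [show (4:ℕ) = 3+1 from rfl, Function.iterate_succ_apply', hit3]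
  have hit5 : sF^[5] (29/50 : ℝ) = sF (sF (sF (sF (sF ((29/50 : ℝ)))))) := by rw [show (5:ℕ) = 4+1 from rfl, Function.iterate_succ_apply', hit4]
  have hpe1 : (∏ i ∈ Finset.range 1, (cF (sIter (i:ℤ) (29/50 : ℝ)) - 1)) = cF ((29/50 : ℝ)) - 1 := by norm_num [Finset.prod_range_one, sIter_natCast]
  have hse1 : (∏ i ∈ Finset.range 1, (dF (sIter (i:ℤ) (29/50 : ℝ)) - 1)) = dF ((29/50 : ℝ)) - 1 := by norm_num [Finset.prod_range_one, sIter_natCast]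
  have hpe2 : (∏ i ∈ Finset.range 2, (cF (sIter (i:ℤ) (29/50 : ℝ)) - 1)) = (∏ i ∈ Finset.range 1, (cF (sIter (i:ℤ) (29/50 : ℝ)) - 1)) * (cF (sF ((29/50 : ℝ))) - 1) := by rw [Finset.prod_range_succ, sIter_natCast, hit1]
  have hse2 : (∏ i ∈ Finset.range 2, (dF (sIter (i:ℤ) (29/50 : ℝ)) - 1)) = (∏ i ∈ Finset.range 1, (dF (sIter (i:ℤ) (29/50 : ℝ)) - 1)) * (dF (sF ((29/50 : ℝ))) - 1) := by rw [Finset.prod_range_succ, sIter_natCast, hit1]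
  have hpe3 : (∏ i ∈ Finset.range 3, (cF (sIter (i:ℤ) (29/50 : ℝ)) - 1)) = (∏ i ∈ Finset.range 2, (cF (sIter (i:ℤ) (29/50 : ℝ)) - 1)) * (cF (sF (sF ((29/50 : ℝ)))) - 1) := by rw [Finset.prod_range_succ, sIter_natCast, hit2]
  have hse3 : (∏ i ∈ Finset.range 3, (dF (sIter (i:ℤ) (29/50 : ℝ)) - 1)) = (∏ i ∈ Finset.range 2, (dF (sIter (i:ℤ) (29/50 : ℝ)) - 1)) * (dF (sF (sF ((29/50 : ℝ)))) - 1) := by rw [Finset.prod_range_succ, sIter_natCast, hit2]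
  have hpe4 : (∏ i ∈ Finset.range 4, (cF (sIter (i:ℤ) (29/50 : ℝ)) - 1)) = (∏ i ∈ Finset.range 3, (cF (sIter (i:ℤ) (29/50 : ℝ)) - 1)) * (cF (sF (sF (sF ((29/50 : ℝ))))) - 1) := by rw [Finset.prod_range_succ, sIter_natCast, hit3]
  have hse4 : (∏ i ∈ Finset.range 4, (dF (sIter (i:ℤ) (29/50 : ℝ)) - 1)) = (∏ i ∈ Finset.range 3, (dF (sIter (i:ℤ) (29/50 : ℝ)) - 1)) * (dF (sF (sF (sF ((29/50 : ℝ))))) - 1) := by rw [Finset.prod_range_succ, sIter_natCast, hit3]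
  have hpe5 : (∏ i ∈ Finset.range 5, (cF (sIter (i:ℤ) (29/50 : ℝ)) - 1)) = (∏ i ∈ Finset.range 4, (cF (sIter (i:ℤ) (29/50 : ℝ)) - 1)) * (cF (sF (sF (sF (sF ((29/50 : ℝ)))))) - 1) := by rw [Finset.prod_range_succ, sIter_natCast, hit4]
  have hse5 : (∏ i ∈ Finset.range 5, (dF (sIter (i:ℤ) (29/50 : ℝ)) - 1)) = (∏ i ∈ Finset.range 4, (dF (sIter (i:ℤ) (29/50 : ℝ)) - 1)) * (dF (sF (sF (sF (sF ((29/50 : ℝ)))))) - 1) := by rw [Finset.prod_range_succ, sIter_natCast, hit4]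
  have hpe6 : (∏ i ∈ Finset.range 6, (cF (sIter (i:ℤ) (29/50 : ℝ)) - 1)) = (∏ i ∈ Finset.range 5, (cF (sIter (i:ℤ) (29/50 : ℝ)) - 1)) * (cF (sF (sF (sF (sF (sF ((29/50 : ℝ))))))) - 1) := by rw [Finset.prod_range_succ, sIter_natCast, hit5]
  have hse6 : (∏ i ∈ Finset.range 6, (dF (sIter (i:ℤ) (29/50 : ℝ)) - 1)) = (∏ i ∈ Finset.range 5, (dF (sIter (i:ℤ) (29/50 : ℝ)) - 1)) * (dF (sF (sF (sF (sF (sF ((29/50 : ℝ))))))) - 1) := by rw [Finset.prod_range_succ, sIter_natCast, hit5]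
  have hPl1 : (503484785329902370375293/625000000000000000000000 : ℝ) ≤ ∏ i ∈ Finset.range 1, (cF (sIter (i:ℤ) (29/50 : ℝ)) - 1) := by rw [hpe1]; exact hc0l
  have hSu1 : (∏ i ∈ Finset.range 1, (dF (sIter (i:ℤ) (29/50 : ℝ)) - 1)) ≤ (175031191163895540242107/2500000000000000000000000 : ℝ) := by rw [hse1]; exact hd0u
  have hPl2 : (190169086790864714329261/2500000000000000000000000 : ℝ) ≤ ∏ i ∈ Finset.range 2, (cF (sIter (i:ℤ) (29/50 : ℝ)) - 1) := by
    rw [hpe2]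
    exact le_trans (by norm_num) (mul_le_mul hPl1 hc1l (by norm_num) (le_trans (by norm_num) hPl1))
  have hSu2 : (∏ i ∈ Finset.range 2, (dF (sIter (i:ℤ) (29/50 : ℝ)) - 1)) ≤ (1365047310048072099079/10000000000000000000000000 : ℝ) := by
    rw [hse2]
    exact le_trans (mul_le_mul hSu1 hd1u hd1p (by norm_num)) (by norm_num)
  have hPl3 : (39524824511556126979/250000000000000000000000 : ℝ) ≤ ∏ i ∈ Finset.range 3, (cF (sIter (i:ℤ) (29/50 : ℝ)) - 1) := by
    rw [hpe3]
    exact le_trans (by norm_num) (mul_le_mul hPl2 hc2l (by norm_num) (le_trans (by norm_num) hPl2))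
  have hSu3 : (∏ i ∈ Finset.range 3, (dF (sIter (i:ℤ) (29/50 : ℝ)) - 1)) ≤ (73479394965327/500000000000000000000000 : ℝ) := by
    rw [hse3]
    exact le_trans (mul_le_mul hSu2 hd2u hd2p (by norm_num)) (by norm_num)
  have hPl4 : (1704720584598049/10000000000000000000000000 : ℝ) ≤ ∏ i ∈ Finset.range 4, (cF (sIter (i:ℤ) (29/50 : ℝ)) - 1) := by
    rw [hpe4]
    exact le_trans (by norm_num) (mul_le_mul hPl3 hc3l (by norm_num) (le_trans (by norm_num) hPl3))
  have hSu4 : (∏ i ∈ Finset.range 4, (dF (sIter (i:ℤ) (29/50 : ℝ)) - 1)) ≤ (107/2500000000000000000000000 : ℝ) := by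
    rw [hse4]
    exact le_trans (mul_le_mul hSu3 hd3u hd3p (by norm_num)) (by norm_num)
  have hPl5 : (99/2000000000000000000000000 : ℝ) ≤ ∏ i ∈ Finset.range 5, (cF (sIter (i:ℤ) (29/50 : ℝ)) - 1) := by
    rw [hpe5]
    exact le_trans (by norm_num) (mul_le_mul hPl4 hc4l (by norm_num) (le_trans (by norm_num) hPl4))
  have hSu5 : (∏ i ∈ Finset.range 5, (dF (sIter (i:ℤ) (29/50 : ℝ)) - 1)) ≤ (1/10000000000000000000000000 : ℝ) := by
    rw [hse5]
    exact le_trans (mul_le_mul hSu4 hd4u hd4p (by norm_num)) (by norm_num)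
  have hPl6 : (0 : ℝ) ≤ ∏ i ∈ Finset.range 6, (cF (sIter (i:ℤ) (29/50 : ℝ)) - 1) := by
    rw [hpe6]
    exact le_trans (by norm_num) (mul_le_mul hPl5 hc5l (by norm_num) (le_trans (by norm_num) hPl5))
  have hSu6 : (∏ i ∈ Finset.range 6, (dF (sIter (i:ℤ) (29/50 : ℝ)) - 1)) ≤ (1/10000000000000000000000000 : ℝ) := by
    rw [hse6]
    exact le_trans (mul_le_mul hSu5 hd5u hd5p (by norm_num)) (by norm_num)
  have hPe : Pfun (29/50 : ℝ) 6 = 1 + (∏ i ∈ Finset.range 1, (cF (sIter (i:ℤ) (29/50 : ℝ)) - 1)) + (∏ i ∈ Finset.range 2, (cF (sIter (i:ℤ) (29/50 : ℝ)) - 1)) + (∏ i ∈ Finset.range 3, (cF (sIter (i:ℤ) (29/50 : ℝ)) - 1)) + (∏ i ∈ Finset.range 4, (cF (sIter (i:ℤ) (29/50 : ℝ)) - 1)) + (∏ i ∈ Finset.range 5, (cF (sIter (i:ℤ) (29/50 : ℝ)) - 1)) + (∏ i ∈ Finset.range 6, (cF (sIter (i:ℤ) (29/50 : ℝ)) - 1))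 := by norm_num [Pfun]
  have hSe : Sfun (29/50 : ℝ) 6 = 1 + (∏ i ∈ Finset.range 1, (dF (sIter (i:ℤ) (29/50 : ℝ)) - 1)) + (∏ i ∈ Finset.range 2, (dF (sIter (i:ℤ) (29/50 : ℝ)) - 1)) + (∏ i ∈ Finset.range 3, (dF (sIter (i:ℤ) (29/50 : ℝ)) - 1)) + (∏ i ∈ Finset.range 4, (dF (sIter (i:ℤ) (29/50 : ℝ)) - 1)) + (∏ i ∈ Finset.range 5, (dF (sIter (i:ℤ) (29/50 : ℝ)) - 1)) + (∏ i ∈ Finset.range 6, (dF (sIter (i:ℤ) (29/50 : ℝ)) - 1)) := by norm_num [Sfun]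
  have hP6 : (4704503476781769903249859/2500000000000000000000000 : ℝ) ≤ Pfun (29/50 : ℝ) 6 := by rw [hPe]; linarith [hPl1, hPl2, hPl3, hPl4, hPl5, hPl6]
  have hS6 : Sfun (29/50 : ℝ) 6 ≤ (10701489813435218132374477/10000000000000000000000000 : ℝ) := by rw [hSe]; linarith [hSu1, hSu2, hSu3, hSu4, hSu5, hSu6]
  exact ⟨hP6, hS6, hSu6⟩

set_option maxHeartbeats 1000000 in
lemma backward_bounds : (530859147198890441120781/2500000000000000000000000 : ℝ) ≤ Qfun (29/50 : ℝ) 6 ∧ Tfun (29/50 : ℝ) 6 ≤ (19844503431925608369989/7812500000000000000000 : ℝ) ∧ (∏ i ∈ Finset.range 5, (dF (sIter (-((i:ℤ)+1)) (29/50 : ℝ)) - 1)⁻¹) ≤ (22138041063/10000000000000000000000000 : ℝ) := by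
  have hb0l : (29/50 : ℝ) ≤ (29/50 : ℝ) := le_refl _
  have hb0u : (29/50 : ℝ) ≤ (29/50 : ℝ) := le_refl _
  have hb0p : (0:ℝ) < (29/50 : ℝ) := by norm_num
  have hv1l : (38461803712613195734466543/10000000000000000000000000 : ℝ) ≤ wF (1 / ((29/50 : ℝ))) := wF_inv_lb hb0p hb0u (by norm_num) (by norm_num)
  have hv1u : wF (1 / ((29/50 : ℝ))) ≤ (2403862732038324733404159/625000000000000000000000 : ℝ) := wF_inv_ub (by norm_num) hb0l (by norm_num) (by norm_num)
  have hb1l : (53556473845580905808069839/10000000000000000000000000 : ℝ) ≤ sFinv ((29/50 : ℝ)) := sFinv_lb hb0p hv1l hv1u (by norm_num) (by norm_num)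
  have hb1u : (sFinv ((29/50 : ℝ))) ≤ (13389118461395226452017461/2500000000000000000000000 : ℝ) := sFinv_ub hb0p hv1l hv1u (by norm_num) (by norm_num)
  have hb1p : (0:ℝ) < (sFinv ((29/50 : ℝ))) := lt_of_lt_of_le (by norm_num) hb1l
  have hm1l : (66215692306631307051981187/10000000000000000000000000 : ℝ) ≤ wF (sFinv ((29/50 : ℝ))) := wF_lb hb1l (by norm_num) (by norm_num)
  have hm1u : wF (sFinv ((29/50 : ℝ))) ≤ (66215692306631307051981191/10000000000000000000000000 : ℝ) := wF_ub hb1u (by norm_num) (by norm_num)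
  have hcb1u : cF (sFinv ((29/50 : ℝ))) - 1 ≤ (47859121537777193048527869/10000000000000000000000000 : ℝ) := cF_sub_one_ub hm1l hm1u (by norm_num) (by norm_num)
  have hcb1p : (0:ℝ) < cF (sFinv ((29/50 : ℝ))) - 1 := cF_sub_one_pos hb1p
  have hdb1l : (5182994416687346196617667/10000000000000000000000000 : ℝ) ≤ dF (sFinv ((29/50 : ℝ))) - 1 := dF_sub_one_lb hm1l hm1u (by norm_num) (by norm_num)
  have hqc1l : (208946584865887781218273/1000000000000000000000000 : ℝ) ≤ (cF (sFinv ((29/50 : ℝ))) - 1)⁻¹ := inv_lb hcb1p hcb1u (by norm_num)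
  have hqd1u : (dF (sFinv ((29/50 : ℝ))) - 1)⁻¹ ≤ (2411733255925295274191051/1250000000000000000000000 : ℝ) := inv_ub (by norm_num) hdb1l (by norm_num)
  have hqd1p : (0:ℝ) ≤ (dF (sFinv ((29/50 : ℝ))) - 1)⁻¹ := inv_nonneg.2 (le_trans (by norm_num) hdb1l)
  have hv2l : (7895806356903437145812987/5000000000000000000000000 : ℝ) ≤ wF (1 / (sFinv ((29/50 : ℝ)))) := wF_inv_lb hb1p hb1u (by norm_num) (by norm_num)
  have hv2u : wF (1 / (sFinv ((29/50 : ℝ)))) ≤ (1973951589225859286453247/1250000000000000000000000 : ℝ) := wF_inv_ub (by norm_num) hb1l (by norm_num) (by norm_num)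
  have hb2l : (204614210920698681447078879/2000000000000000000000000 : ℝ) ≤ sFinv (sFinv ((29/50 : ℝ))) := sFinv_lb hb1p hv2l hv2u (by norm_num) (by norm_num)
  have hb2u : (sFinv (sFinv ((29/50 : ℝ)))) ≤ (511535527301746703617697563/5000000000000000000000000 : ℝ) := sFinv_ub hb1p hv2l hv2u (by norm_num) (by norm_num)
  have hb2p : (0:ℝ) < (sFinv (sFinv ((29/50 : ℝ)))) := lt_of_lt_of_le (by norm_num) hb2l
  have hm2l : (286261566348469966201121519/10000000000000000000000000 : ℝ) ≤ wF (sFinv (sFinv ((29/50 : ℝ)))) := wF_lb hb2l (by norm_num) (by norm_num)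
  have hm2u : wF (sFinv (sFinv ((29/50 : ℝ)))) ≤ (143130783174234983100560811/5000000000000000000000000 : ℝ) := wF_ub hb2u (by norm_num) (by norm_num)
  have hcb2u : cF (sFinv (sFinv ((29/50 : ℝ)))) - 1 ≤ (615133614682422940943118173/10000000000000000000000000 : ℝ) := cF_sub_one_ub hm2l hm2u (by norm_num) (by norm_num)
  have hcb2p : (0:ℝ) < cF (sFinv (sFinv ((29/50 : ℝ)))) - 1 := cF_sub_one_pos hb2p
  have hdb2l : (32201465575668075473790969/10000000000000000000000000 : ℝ) ≤ dF (sFinv (sFinv ((29/50 : ℝ)))) - 1 := dF_sub_one_lb hm2l hm2u (by norm_num) (by norm_num)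
  have hqc2l : (32513261383586500845913/2000000000000000000000000 : ℝ) ≤ (cF (sFinv (sFinv ((29/50 : ℝ)))) - 1)⁻¹ := inv_lb hcb2p hcb2u (by norm_num)
  have hqd2u : (dF (sFinv (sFinv ((29/50 : ℝ)))) - 1)⁻¹ ≤ (1552724359160248032843991/5000000000000000000000000 : ℝ) := inv_ub (by norm_num) hdb2l (by norm_num)
  have hqd2p : (0:ℝ) ≤ (dF (sFinv (sFinv ((29/50 : ℝ)))) - 1)⁻¹ := inv_nonneg.2 (le_trans (by norm_num) hdb2l)
  have hv3l : (10383621416739271638689103/10000000000000000000000000 : ℝ) ≤ wF (1 / (sFinv (sFinv ((29/50 : ℝ))))) := wF_inv_lb hb2p hb2u (by norm_num) (by norm_num)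
  have hv3u : wF (1 / (sFinv (sFinv ((29/50 : ℝ))))) ≤ (648976338546204477418069/625000000000000000000000 : ℝ) := wF_inv_ub (by norm_num) hb2l (by norm_num) (by norm_num)
  have hb3l : (218485122520707627859879144931/10000000000000000000000000 : ℝ) ≤ sFinv (sFinv (sFinv ((29/50 : ℝ)))) := sFinv_lb hb2p hv3l hv3u (by norm_num) (by norm_num)
  have hb3u : (sFinv (sFinv (sFinv ((29/50 : ℝ))))) ≤ (218485122520707627859880286717/10000000000000000000000000 : ℝ) := sFinv_ub hb2p hv3l hv3u (by norm_num) (by norm_num)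
  have hb3p : (0:ℝ) < (sFinv (sFinv (sFinv ((29/50 : ℝ))))) := lt_of_lt_of_le (by norm_num) hb3l
  have hm3l : (2090389305946180101917026913/5000000000000000000000000 : ℝ) ≤ wF (sFinv (sFinv (sFinv ((29/50 : ℝ))))) := wF_lb hb3l (by norm_num) (by norm_num)
  have hm3u : wF (sFinv (sFinv (sFinv ((29/50 : ℝ))))) ≤ (4180778611892360203834064751/10000000000000000000000000 : ℝ) := wF_ub hb3u (by norm_num) (by norm_num)
  have hcb3u : cF (sFinv (sFinv (sFinv ((29/50 : ℝ))))) - 1 ≤ (27701650809953362251594479417/2500000000000000000000000 : ℝ) := cF_sub_one_ub hm3l hm3u (by norm_num) (by norm_num)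
  have hcb3p : (0:ℝ) < cF (sFinv (sFinv (sFinv ((29/50 : ℝ))))) - 1 := cF_sub_one_pos hb3p
  have hdb3l : (259429628721842307951443397/5000000000000000000000000 : ℝ) ≤ dF (sFinv (sFinv (sFinv ((29/50 : ℝ))))) - 1 := dF_sub_one_lb hm3l hm3u (by norm_num) (by norm_num)
  have hqc3l : (112809161498677528283/1250000000000000000000000 : ℝ) ≤ (cF (sFinv (sFinv (sFinv ((29/50 : ℝ))))) - 1)⁻¹ := inv_lb hcb3p hcb3u (by norm_num)
  have hqd3u : (dF (sFinv (sFinv (sFinv ((29/50 : ℝ))))) - 1)⁻¹ ≤ (192730492065767356358501/10000000000000000000000000 : ℝ) := inv_ub (by norm_num) hdb3l (by norm_num)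
  have hqd3p : (0:ℝ) ≤ (dF (sFinv (sFinv (sFinv ((29/50 : ℝ))))) - 1)⁻¹ := inv_nonneg.2 (le_trans (by norm_num) hdb3l)
  have hv4l : (2000366124142753639724849/2000000000000000000000000 : ℝ) ≤ wF (1 / (sFinv (sFinv (sFinv ((29/50 : ℝ)))))) := wF_inv_lb hb3p hb3u (by norm_num) (by norm_num)
  have hv4u : wF (1 / (sFinv (sFinv (sFinv ((29/50 : ℝ)))))) ≤ (5000915310356884099312123/5000000000000000000000000 : ℝ) := wF_inv_ub (by norm_num) hb3l (by norm_num) (by norm_num)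
  have hb4l : (9549116058693223564677362057026341/10000000000000000000000000 : ℝ) ≤ sFinv (sFinv (sFinv (sFinv ((29/50 : ℝ))))) := sFinv_lb hb3p hv4l hv4u (by norm_num) (by norm_num)
  have hb4u : (sFinv (sFinv (sFinv (sFinv ((29/50 : ℝ)))))) ≤ (9549116058693223564687794830172011/10000000000000000000000000 : ℝ) := sFinv_ub hb3p hv4l hv4u (by norm_num) (by norm_num)
  have hb4p : (0:ℝ) < (sFinv (sFinv (sFinv (sFinv ((29/50 : ℝ)))))) := lt_of_lt_of_le (by norm_num) hb4l
  have hm4l : (874030482761017829464579719199/10000000000000000000000000 : ℝ) ≤ wF (sFinv (sFinv (sFinv (sFinv ((29/50 : ℝ)))))) := wF_lb hb4l (by norm_num) (by norm_num)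
  have hm4u : wF (sFinv (sFinv (sFinv (sFinv ((29/50 : ℝ)))))) ≤ (874030482761017829465057175003/10000000000000000000000000 : ℝ) := wF_ub hb4u (by norm_num) (by norm_num)
  have hcb4u : cF (sFinv (sFinv (sFinv (sFinv ((29/50 : ℝ)))))) - 1 ≤ (190995431481105886561197872461267/400000000000000000000000 : ℝ) := cF_sub_one_ub hm4l hm4u (by norm_num) (by norm_num)
  have hcb4p : (0:ℝ) < cF (sFinv (sFinv (sFinv (sFinv ((29/50 : ℝ)))))) - 1 := cF_sub_one_pos hb4p
  have hdb4l : (27312515100583204241645825667/2500000000000000000000000 : ℝ) ≤ dF (sFinv (sFinv (sFinv (sFinv ((29/50 : ℝ)))))) - 1 := dF_sub_one_lb hm4l hm4u (by norm_num) (by norm_num)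
  have hqc4l : (10471454654651511/5000000000000000000000000 : ℝ) ≤ (cF (sFinv (sFinv (sFinv (sFinv ((29/50 : ℝ)))))) - 1)⁻¹ := inv_lb hcb4p hcb4u (by norm_num)
  have hqd4u : (dF (sFinv (sFinv (sFinv (sFinv ((29/50 : ℝ)))))) - 1)⁻¹ ≤ (183066260342066958911/2000000000000000000000000 : ℝ) := inv_ub (by norm_num) hdb4l (by norm_num)
  have hqd4p : (0:ℝ) ≤ (dF (sFinv (sFinv (sFinv (sFinv ((29/50 : ℝ)))))) - 1)⁻¹ := inv_nonneg.2 (le_trans (by norm_num) hdb4l)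
  have hv5l : (1000000004188869385434669/1000000000000000000000000 : ℝ) ≤ wF (1 / (sFinv (sFinv (sFinv (sFinv ((29/50 : ℝ))))))) := wF_inv_lb hb4p hb4u (by norm_num) (by norm_num)
  have hv5u : wF (1 / (sFinv (sFinv (sFinv (sFinv ((29/50 : ℝ))))))) ≤ (10000000041888693854346691/10000000000000000000000000 : ℝ) := wF_inv_ub (by norm_num) hb4l (by norm_num) (by norm_num)
  have hb5l : (18237123586420604782384103413694378706682771/10000000000000000000000000 : ℝ) ≤ sFinv (sFinv (sFinv (sFinv (sFinv ((29/50 : ℝ)))))) := sFinv_lb hb4p hv5l hv5u (by norm_num) (by norm_num)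
  have hb5u : (sFinv (sFinv (sFinv (sFinv (sFinv ((29/50 : ℝ))))))) ≤ (9118561793210302826563076991340278352400127/5000000000000000000000000 : ℝ) := sFinv_ub hb4p hv5l hv5u (by norm_num) (by norm_num)
  have hb5p : (0:ℝ) < (sFinv (sFinv (sFinv (sFinv (sFinv ((29/50 : ℝ))))))) := lt_of_lt_of_le (by norm_num) hb5l
  have hm5l : (7639292864954578720201157507996877/2000000000000000000000000 : ℝ) ≤ wF (sFinv (sFinv (sFinv (sFinv (sFinv ((29/50 : ℝ))))))) := wF_lb hb5l (by norm_num) (by norm_num)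
  have hm5u : wF (sFinv (sFinv (sFinv (sFinv (sFinv ((29/50 : ℝ))))))) ≤ (38196464324772894512861966861014647/10000000000000000000000000 : ℝ) := wF_ub hb5u (by norm_num) (by norm_num)
  have hcb5u : cF (sFinv (sFinv (sFinv (sFinv (sFinv ((29/50 : ℝ))))))) - 1 ≤ (2279640451883494236150728108415879077925527/2500000000000000000000000 : ℝ) := cF_sub_one_ub hm5l hm5u (by norm_num) (by norm_num)
  have hcb5p : (0:ℝ) < cF (sFinv (sFinv (sFinv (sFinv (sFinv ((29/50 : ℝ))))))) - 1 := cF_sub_one_pos hb5p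
  have hdb5l : (2387279018423305793726361414498069/5000000000000000000000000 : ℝ) ≤ dF (sFinv (sFinv (sFinv (sFinv (sFinv ((29/50 : ℝ))))))) - 1 := dF_sub_one_lb hm5l hm5u (by norm_num) (by norm_num)
  have hqc5l : (10966641/10000000000000000000000000 : ℝ) ≤ (cF (sFinv (sFinv (sFinv (sFinv (sFinv ((29/50 : ℝ))))))) - 1)⁻¹ := inv_lb hcb5p hcb5u (by norm_num)
  have hqd5u : (dF (sFinv (sFinv (sFinv (sFinv (sFinv ((29/50 : ℝ))))))) - 1)⁻¹ ≤ (5236086734534997/2500000000000000000000000 : ℝ) := inv_ub (by norm_num) hdb5l (by norm_num)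
  have hqd5p : (0:ℝ) ≤ (dF (sFinv (sFinv (sFinv (sFinv (sFinv ((29/50 : ℝ))))))) - 1)⁻¹ := inv_nonneg.2 (le_trans (by norm_num) hdb5l)
  have hbit1 : sFinv^[1] (29/50 : ℝ) = sFinv ((29/50 : ℝ)) := by rw [Function.iterate_one]
  have hbit2 : sFinv^[2] (29/50 : ℝ) = sFinv (sFinv ((29/50 : ℝ))) := by rw [show (2:ℕ) = 1+1 from rfl, Function.iterate_succ_apply', hbit1]
  have hbit3 : sFinv^[3] (29/50 : ℝ) = sFinv (sFinv (sFinv ((29/50 : ℝ)))) := by rw [show (3:ℕ) = 2+1 from rfl, Function.iterate_succ_apply', hbit2]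
  have hbit4 : sFinv^[4] (29/50 : ℝ) = sFinv (sFinv (sFinv (sFinv ((29/50 : ℝ))))) := by rw [show (4:ℕ) = 3+1 from rfl, Function.iterate_succ_apply', hbit3]
  have hbit5 : sFinv^[5] (29/50 : ℝ) = sFinv (sFinv (sFinv (sFinv (sFinv ((29/50 : ℝ)))))) := by rw [show (5:ℕ) = 4+1 from rfl, Function.iterate_succ_apply', hbit4]
  have hqe1 : (∏ i ∈ Finset.range 1, (cF (sIter (-((i:ℤ)+1)) (29/50 : ℝ)) - 1)⁻¹) = (cF (sFinv ((29/50 : ℝ))) - 1)⁻¹ := by rw [Finset.prod_range_one, sIter_negCast]; norm_num [hbit1]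
  have hte1 : (∏ i ∈ Finset.range 1, (dF (sIter (-((i:ℤ)+1)) (29/50 : ℝ)) - 1)⁻¹) = (dF (sFinv ((29/50 : ℝ))) - 1)⁻¹ := by rw [Finset.prod_range_one, sIter_negCast]; norm_num [hbit1]
  have hqe2 : (∏ i ∈ Finset.range 2, (cF (sIter (-((i:ℤ)+1)) (29/50 : ℝ)) - 1)⁻¹) = (∏ i ∈ Finset.range 1, (cF (sIter (-((i:ℤ)+1)) (29/50 : ℝ)) - 1)⁻¹) * (cF (sFinv (sFinv ((29/50 : ℝ)))) - 1)⁻¹ := by rw [Finset.prod_range_succ, sIter_negCast]; norm_num [hbit2]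
  have hte2 : (∏ i ∈ Finset.range 2, (dF (sIter (-((i:ℤ)+1)) (29/50 : ℝ)) - 1)⁻¹) = (∏ i ∈ Finset.range 1, (dF (sIter (-((i:ℤ)+1)) (29/50 : ℝ)) - 1)⁻¹) * (dF (sFinv (sFinv ((29/50 : ℝ)))) - 1)⁻¹ := by rw [Finset.prod_range_succ, sIter_negCast]; norm_num [hbit2]
  have hqe3 : (∏ i ∈ Finset.range 3, (cF (sIter (-((i:ℤ)+1)) (29/50 : ℝ)) - 1)⁻¹) = (∏ i ∈ Finset.range 2, (cF (sIter (-((i:ℤ)+1)) (29/50 : ℝ)) - 1)⁻¹) * (cF (sFinv (sFinv (sFinv ((29/50 : ℝ))))) - 1)⁻¹ := by rw [Finset.prod_range_succ, sIter_negCast]; norm_num [hbit3]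
  have hte3 : (∏ i ∈ Finset.range 3, (dF (sIter (-((i:ℤ)+1)) (29/50 : ℝ)) - 1)⁻¹) = (∏ i ∈ Finset.range 2, (dF (sIter (-((i:ℤ)+1)) (29/50 : ℝ)) - 1)⁻¹) * (dF (sFinv (sFinv (sFinv ((29/50 : ℝ))))) - 1)⁻¹ := by rw [Finset.prod_range_succ, sIter_negCast]; norm_num [hbit3]
  have hqe4 : (∏ i ∈ Finset.range 4, (cF (sIter (-((i:ℤ)+1)) (29/50 : ℝ)) - 1)⁻¹) = (∏ i ∈ Finset.range 3, (cF (sIter (-((i:ℤ)+1)) (29/50 : ℝ)) - 1)⁻¹) * (cF (sFinv (sFinv (sFinv (sFinv ((29/50 : ℝ)))))) - 1)⁻¹ := by rw [Finset.prod_range_succ, sIter_negCast]; norm_num [hbit4]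
  have hte4 : (∏ i ∈ Finset.range 4, (dF (sIter (-((i:ℤ)+1)) (29/50 : ℝ)) - 1)⁻¹) = (∏ i ∈ Finset.range 3, (dF (sIter (-((i:ℤ)+1)) (29/50 : ℝ)) - 1)⁻¹) * (dF (sFinv (sFinv (sFinv (sFinv ((29/50 : ℝ)))))) - 1)⁻¹ := by rw [Finset.prod_range_succ, sIter_negCast]; norm_num [hbit4]
  have hqe5 : (∏ i ∈ Finset.range 5, (cF (sIter (-((i:ℤ)+1)) (29/50 : ℝ)) - 1)⁻¹) = (∏ i ∈ Finset.range 4, (cF (sIter (-((i:ℤ)+1)) (29/50 : ℝ)) - 1)⁻¹) * (cF (sFinv (sFinv (sFinv (sFinv (sFinv ((29/50 : ℝ))))))) - 1)⁻¹ := by rw [Finset.prod_range_succ, sIter_negCast]; norm_num [hbit5]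
  have hte5 : (∏ i ∈ Finset.range 5, (dF (sIter (-((i:ℤ)+1)) (29/50 : ℝ)) - 1)⁻¹) = (∏ i ∈ Finset.range 4, (dF (sIter (-((i:ℤ)+1)) (29/50 : ℝ)) - 1)⁻¹) * (dF (sFinv (sFinv (sFinv (sFinv (sFinv ((29/50 : ℝ))))))) - 1)⁻¹ := by rw [Finset.prod_range_succ, sIter_negCast]; norm_num [hbit5]
  have hQl1 : (208946584865887781218273/1000000000000000000000000 : ℝ) ≤ ∏ i ∈ Finset.range 1, (cF (sIter (-((i:ℤ)+1)) (29/50 : ℝ)) - 1)⁻¹ := by rw [hqe1]; exact hqc1l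
  have hTu1 : (∏ i ∈ Finset.range 1, (dF (sIter (-((i:ℤ)+1)) (29/50 : ℝ)) - 1)⁻¹) ≤ (2411733255925295274191051/1250000000000000000000000 : ℝ) := by rw [hte1]; exact hqd1u
  have hQl2 : (679353492895234877987/200000000000000000000000 : ℝ) ≤ ∏ i ∈ Finset.range 2, (cF (sIter (-((i:ℤ)+1)) (29/50 : ℝ)) - 1)⁻¹ := by
    rw [hqe2]
    exact le_trans (by norm_num) (mul_le_mul hQl1 hqc2l (by norm_num) (le_trans (by norm_num) hQl1))
  have hTu2 : (∏ i ∈ Finset.range 2, (dF (sIter (-((i:ℤ)+1)) (29/50 : ℝ)) - 1)⁻¹) ≤ (2995805579417650053208393/5000000000000000000000000 : ℝ) := by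
    rw [hte2]
    exact le_trans (mul_le_mul hTu1 hqd2u hqd2p (by norm_num)) (by norm_num)
  have hQl3 : (1532745957894184563/5000000000000000000000000 : ℝ) ≤ ∏ i ∈ Finset.range 3, (cF (sIter (-((i:ℤ)+1)) (29/50 : ℝ)) - 1)⁻¹ := by
    rw [hqe3]
    exact le_trans (by norm_num) (mul_le_mul hQl2 hqc3l (by norm_num) (le_trans (by norm_num) hQl2))
  have hTu3 : (∏ i ∈ Finset.range 3, (dF (sIter (-((i:ℤ)+1)) (29/50 : ℝ)) - 1)⁻¹) ≤ (57738308345453498136103/5000000000000000000000000 : ℝ) := by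
    rw [hte3]
    exact le_trans (mul_le_mul hTu2 hqd3u hqd3p (by norm_num)) (by norm_num)
  have hQl4 : (3210015959/5000000000000000000000000 : ℝ) ≤ ∏ i ∈ Finset.range 4, (cF (sIter (-((i:ℤ)+1)) (29/50 : ℝ)) - 1)⁻¹ := by
    rw [hqe4]
    exact le_trans (by norm_num) (mul_le_mul hQl3 hqc4l (by norm_num) (le_trans (by norm_num) hQl3))
  have hTu4 : (∏ i ∈ Finset.range 4, (dF (sIter (-((i:ℤ)+1)) (29/50 : ℝ)) - 1)⁻¹) ≤ (10569936187279327457/10000000000000000000000000 : ℝ) := by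
    rw [hte4]
    exact le_trans (mul_le_mul hTu3 hqd4u hqd4p (by norm_num)) (by norm_num)
  have hQl5 : (0 : ℝ) ≤ ∏ i ∈ Finset.range 5, (cF (sIter (-((i:ℤ)+1)) (29/50 : ℝ)) - 1)⁻¹ := by
    rw [hqe5]
    exact le_trans (by norm_num) (mul_le_mul hQl4 hqc5l (by norm_num) (le_trans (by norm_num) hQl4))
  have hTu5 : (∏ i ∈ Finset.range 5, (dF (sIter (-((i:ℤ)+1)) (29/50 : ℝ)) - 1)⁻¹) ≤ (22138041063/10000000000000000000000000 : ℝ) := by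
    rw [hte5]
    exact le_trans (mul_le_mul hTu4 hqd5u hqd5p (by norm_num)) (by norm_num)
  have hQe : Qfun (29/50 : ℝ) 6 = (∏ i ∈ Finset.range 1, (cF (sIter (-((i:ℤ)+1)) (29/50 : ℝ)) - 1)⁻¹) + (∏ i ∈ Finset.range 2, (cF (sIter (-((i:ℤ)+1)) (29/50 : ℝ)) - 1)⁻¹) + (∏ i ∈ Finset.range 3, (cF (sIter (-((i:ℤ)+1)) (29/50 : ℝ)) - 1)⁻¹) + (∏ i ∈ Finset.range 4, (cF (sIter (-((i:ℤ)+1)) (29/50 : ℝ)) - 1)⁻¹) + (∏ i ∈ Finset.range 5, (cF (sIter (-((i:ℤ)+1)) (29/50 : ℝ)) - 1)⁻¹) := by norm_num [Qfun]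
  have hTe : Tfun (29/50 : ℝ) 6 = (∏ i ∈ Finset.range 1, (dF (sIter (-((i:ℤ)+1)) (29/50 : ℝ)) - 1)⁻¹) + (∏ i ∈ Finset.range 2, (dF (sIter (-((i:ℤ)+1)) (29/50 : ℝ)) - 1)⁻¹) + (∏ i ∈ Finset.range 3, (dF (sIter (-((i:ℤ)+1)) (29/50 : ℝ)) - 1)⁻¹) + (∏ i ∈ Finset.range 4, (dF (sIter (-((i:ℤ)+1)) (29/50 : ℝ)) - 1)⁻¹) + (∏ i ∈ Finset.range 5, (dF (sIter (-((i:ℤ)+1)) (29/50 : ℝ)) - 1)⁻¹) := by norm_num [Tfun]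
  have hQ6 : (530859147198890441120781/2500000000000000000000000 : ℝ) ≤ Qfun (29/50 : ℝ) 6 := by rw [hQe]; linarith [hQl1, hQl2, hQl3, hQl4, hQl5]
  have hT6 : Tfun (29/50 : ℝ) 6 ≤ (19844503431925608369989/7812500000000000000000 : ℝ) := by rw [hTe]; linarith [hTu1, hTu2, hTu3, hTu4, hTu5]
  exact ⟨hQ6, hT6, hTu5⟩

lemma numeric_bound {k : ℕ} (hk : 6 ≤ k) : Mfin k k (29/50 : ℝ) ≤ 0.999904 := by
  obtain ⟨m, rfl⟩ : ∃ m, k = m + 1 := ⟨k-1, by omega⟩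
  obtain ⟨hP6, hS6, hSu6⟩ := forward_bounds
  obtain ⟨hQ6, hT6, hTu5⟩ := backward_bounds

  -- final assembly
  have hx : (0:ℝ) < 29/50 := by norm_num
  have hP := le_trans hP6 (Pfun_mono hx (show 6 ≤ m+1 by omega))
  have hQ := le_trans hQ6 (Qfun_mono hx (by norm_num) (show 6 ≤ m+1 by omega))
  have hS := Sfun_tail hx (by norm_num) (show 6 ≤ m+1 by omega)
  have hT := Tfun_tail (le_refl ((29:ℝ)/50)) (show 5 ≤ m by omega)
  have hden : (0:ℝ) < Pfun (29/50 : ℝ) (m+1) + Qfun (29/50 : ℝ) (m+1) := by linarith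
  rw [Mfin, div_le_iff₀ hden]
  have hnum : Sfun (29/50 : ℝ) (m+1) + Tfun (29/50 : ℝ) (m+1) ≤ (1444098168252001644881701/400000000000000000000000 : ℝ) := by
    linarith [hSu6, hTu5]
  calc (29/50 : ℝ) * (Sfun (29/50 : ℝ) (m+1) + Tfun (29/50 : ℝ) (m+1))
      ≤ (29/50 : ℝ) * (1444098168252001644881701/400000000000000000000000 : ℝ) := by linarith
    _ ≤ 0.999904 * ((4704503476781769903249859/2500000000000000000000000 : ℝ) + (530859147198890441120781/2500000000000000000000000 : ℝ)) := by norm_num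
    _ ≤ 0.999904 * (Pfun (29/50 : ℝ) (m+1) + Qfun (29/50 : ℝ) (m+1)) := by nlinarith

/-- If `M : ℝ → ℝ` is the Mina margin map (i.e. `M(x) = lim_k M_{k,k}(x)` for `x > 0`),
then `λ = inf { M(x) : x ∈ [1/3,3] } ≤ 0.999904`; in particular `M(0.58) ≤ 0.999904`. -/
theorem lambda_upper_bound (M : ℝ → ℝ)
    (hM : ∀ x : ℝ, 0 < x →
      Filter.Tendsto (fun k : ℕ => Mfin k k x) Filter.atTop (nhds (M x))) :
    sInf (M '' Set.Icc (1 / 3 : ℝ) 3) ≤ 0.999904 ∧ M 0.58 ≤ 0.999904 := by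
  have h058 : (0.58 : ℝ) = 29/50 := by norm_num
  have hb : M 0.58 ≤ 0.999904 := by
    refine le_of_tendsto (hM 0.58 (by norm_num)) ?_
    refine Filter.eventually_atTop.2 ⟨6, fun k hk => ?_⟩
    rw [h058]
    exact numeric_bound hk
  refine ⟨?_, hb⟩
  by_cases hbdd : BddBelow (M '' Set.Icc (1/3 : ℝ) 3)
  · exact le_trans (csInf_le hbdd
      (Set.mem_image_of_mem M (Set.mem_Icc.mpr ⟨by norm_num, by norm_num⟩))) hb
  · rw [Real.sInf_of_not_bddBelow hbdd]; norm_num
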